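/- Let ω, n > 0 with ω/n irrational, let I₀ be a finite set of nonzero integers, B : I₀ → ℝ, and let γ, μ, A₃, C₀ ∈ ℝ and Φ : ℝ → ℝ be continuous. Then lim_{T→+∞} (1/T) ∫₀ᵀ sin(ωτ) [ 2 Σ_{i∈I₀} B_i sin(i n τ − C₀ sin(ωτ)) − 2γ Φ(C₀ ω cos(ωτ)) − μ C₀ sin(ωτ) + (A₃/3) C₀³ sin³(ωτ) ] dτ = −(1/2) μ C₀ + (A₃/8) C₀³. -/

import Mathlib

open Filter MeasureTheory intervalIntegral Function Set Submodule

/- ### Auxiliary lemmas -/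

lemma tendsto_avg_of_bounded (F : ℝ → ℝ) (c M : ℝ)
    (h : ∀ T : ℝ, |F T - c * T| ≤ M) :
    Tendsto (fun T : ℝ => (1 / T) * F T) atTop (nhds c) := by
  have h2 : Tendsto (fun T : ℝ => (F T - c * T) / T) atTop (nhds 0) := by
    apply squeeze_zero_norm' (a := fun T : ℝ => M / T) ?_
      (tendsto_const_nhds.div_atTop tendsto_id)
    filter_upwards [eventually_gt_atTop (0:ℝ)] with T hT
    rw [norm_div, Real.norm_eq_abs, Real.norm_eq_abs, abs_of_pos hT]
    exact div_le_div_of_nonneg_right (h T) hT.le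
  have h3 : Tendsto (fun T : ℝ => c + (F T - c * T) / T) atTop (nhds c) := by
    simpa using tendsto_const_nhds.add h2
  apply h3.congr'
  filter_upwards [eventually_gt_atTop (0:ℝ)] with T hT
  field_simp
  ring

lemma tendsto_cdiv_of_bounded (u : ℝ → ℂ) (M : ℝ) (h : ∀ T, ‖u T‖ ≤ M) :
    Tendsto (fun T : ℝ => (1 / (T:ℂ)) * u T) atTop (nhds 0) := by
  apply squeeze_zero_norm' (a := fun T : ℝ => M / T) ?_
    (tendsto_const_nhds.div_atTop tendsto_id)
  filter_upwards [eventually_gt_atTop (0:ℝ)] with T hT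
  rw [norm_mul, norm_div, norm_one, Complex.norm_real, Real.norm_eq_abs, abs_of_pos hT]
  rw [div_mul_eq_mul_div, one_mul]
  exact div_le_div_of_nonneg_right (h T) hT.le

instance fact_two_pi_pos : Fact (0 < 2 * Real.pi) := ⟨by positivity⟩

lemma periodic_lift_eq {g : ℝ → ℂ} (hper : Function.Periodic g (2 * Real.pi)) (x : ℝ) :
    AddCircle.liftIco (2 * Real.pi) 0 g (↑x) = g x := by
  have hp : 0 < 2 * Real.pi := by positivity
  set p := 2 * Real.pi
  set m : ℤ := ⌊x / p⌋
  set y : ℝ := x - m * p with hy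
  have hy0 : y ∈ Set.Ico 0 p := ⟨Int.sub_floor_div_mul_nonneg x hp, Int.sub_floor_div_mul_lt x hp⟩
  have hcoe : (x : AddCircle p) = (y : AddCircle p) := by
    have : ((m * p : ℝ) : AddCircle p) = 0 := by
      rw [AddCircle.coe_eq_zero_iff]
      exact ⟨m, by rw [zsmul_eq_mul]⟩
    have h2 : (x : AddCircle p) = ((y + m * p : ℝ) : AddCircle p) := by rw [hy]; ring_nf
    rw [h2, AddCircle.coe_add, this, add_zero]
  rw [hcoe, AddCircle.liftIco_coe_apply (by simpa using hy0)]
  rw [hy]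
  exact hper.sub_int_mul_eq m

lemma trig_approx {g : ℝ → ℂ} (hg : Continuous g) (hper : Function.Periodic g (2 * Real.pi))
    {ε : ℝ} (hε : 0 < ε) :
    ∃ (s : Finset ℤ) (c : ℤ → ℂ), ∀ θ : ℝ,
      ‖g θ - ∑ k ∈ s, c k * Complex.exp ((k : ℂ) * (θ : ℂ) * Complex.I)‖ ≤ ε := by
  have hp : 0 < 2 * Real.pi := by positivity
  have hg0 : g 0 = g (0 + 2 * Real.pi) := by rw [zero_add, ← hper 0, zero_add]
  set G : C(AddCircle (2 * Real.pi), ℂ) :=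
    ⟨AddCircle.liftIco (2 * Real.pi) 0 g,
      AddCircle.liftIco_continuous (by simpa using hg0) hg.continuousOn⟩ with hG
  have hGmem : G ∈ closure ((span ℂ (range <| @fourier (2 * Real.pi))) : Set _) := by
    rw [← Submodule.topologicalClosure_coe, span_fourier_closure_eq_top]
    trivial
  rw [Metric.mem_closure_iff] at hGmem
  obtain ⟨P, hPmem, hPd⟩ := hGmem ε hε
  rw [SetLike.mem_coe, Finsupp.mem_span_range_iff_exists_finsupp] at hPmem
  obtain ⟨c, hc⟩ := hPmem
  refine ⟨c.support, fun k => c k, fun θ => ?_⟩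
  have hPθ : P (↑θ) = ∑ k ∈ c.support, c k * Complex.exp ((k : ℂ) * (θ : ℂ) * Complex.I) := by
    rw [← hc]
    rw [Finsupp.sum]
    rw [ContinuousMap.coe_sum, Finset.sum_apply]
    refine Finset.sum_congr rfl fun k _ => ?_
    rw [ContinuousMap.coe_smul, Pi.smul_apply, smul_eq_mul]
    congr 1
    rw [fourier_coe_apply]
    congr 1
    have : (2 * Real.pi : ℂ) ≠ 0 := by
      simpa using Real.pi_ne_zero
    push_cast
    field_simp
  have hGθ : G (↑θ) = g θ := periodic_lift_eq hper θ
  calc ‖g θ - ∑ k ∈ c.support, c k * Complex.exp ((k : ℂ) * (θ : ℂ) * Complex.I)‖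
      = ‖(G - P) (↑θ)‖ := by rw [ContinuousMap.sub_apply, hGθ, hPθ]
    _ ≤ ‖G - P‖ := ContinuousMap.norm_coe_le_norm _ _
    _ ≤ ε := by rw [← dist_eq_norm]; exact (hPd).le

lemma weyl_complex (ω a : ℝ) (ha : ∀ k : ℤ, a + k * ω ≠ 0)
    (g : ℝ → ℂ) (hg : Continuous g) (hper : Function.Periodic g (2 * Real.pi)) :
    Tendsto (fun T : ℝ => (1 / (T:ℂ)) * ∫ τ in (0:ℝ)..T,
      Complex.exp ((a * τ : ℝ) * Complex.I) * g (ω * τ)) atTop (nhds 0) := by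
  have hcont : Continuous fun τ : ℝ => Complex.exp ((a * τ : ℝ) * Complex.I) * g (ω * τ) := by
    fun_prop
  rw [NormedAddCommGroup.tendsto_nhds_zero]
  intro ε hε
  obtain ⟨s, c, hsc⟩ := trig_approx hg hper (ε := ε / 3) (by positivity)
  set S : ℝ → ℂ := fun T => ∑ k ∈ s, c k *
    ∫ τ in (0:ℝ)..T, Complex.exp ((((a + (k:ℝ) * ω) : ℝ) * Complex.I) * (τ:ℂ)) with hS
  have hknz : ∀ k : ℤ, (((a + (k:ℝ) * ω) : ℝ) * Complex.I : ℂ) ≠ 0 := fun k =>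
    mul_ne_zero (Complex.ofReal_ne_zero.mpr (ha k)) Complex.I_ne_zero
  have hexpcont : ∀ k : ℤ, Continuous fun τ : ℝ =>
      Complex.exp ((((a + (k:ℝ) * ω) : ℝ) * Complex.I) * (τ:ℂ)) := by
    intro k; fun_prop
  have hsumcont : Continuous fun τ : ℝ => ∑ k ∈ s,
      c k * Complex.exp ((((a + (k:ℝ) * ω) : ℝ) * Complex.I) * (τ:ℂ)) :=
    continuous_finset_sum s fun k _ => continuous_const.mul (hexpcont k)
  have h1 : ∀ T : ℝ, ‖(∫ τ in (0:ℝ)..T, Complex.exp ((a * τ : ℝ) * Complex.I) * g (ω * τ))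
      - S T‖ ≤ ε / 3 * |T - 0| := by
    intro T
    have hSint : S T = ∫ τ in (0:ℝ)..T, ∑ k ∈ s,
        c k * Complex.exp ((((a + (k:ℝ) * ω) : ℝ) * Complex.I) * (τ:ℂ)) := by
      rw [intervalIntegral.integral_finset_sum]
      · exact Finset.sum_congr rfl fun k _ => (intervalIntegral.integral_const_mul _ _).symm
      · exact fun k _ => (continuous_const.mul (hexpcont k)).intervalIntegrable _ _
    rw [hSint, ← intervalIntegral.integral_sub (hcont.intervalIntegrable _ _)
      (hsumcont.intervalIntegrable _ _)]
    apply intervalIntegral.norm_integral_le_of_norm_le_const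
    intro τ _
    have hfac : Complex.exp ((a * τ : ℝ) * Complex.I) * g (ω * τ)
        - ∑ k ∈ s, c k * Complex.exp ((((a + (k:ℝ) * ω) : ℝ) * Complex.I) * (τ:ℂ))
        = Complex.exp ((a * τ : ℝ) * Complex.I) *
          (g (ω * τ) - ∑ k ∈ s, c k * Complex.exp ((k : ℂ) * ((ω * τ : ℝ) : ℂ) * Complex.I)) := by
      rw [mul_sub, Finset.mul_sum]
      congr 1
      refine Finset.sum_congr rfl fun k _ => ?_
      rw [mul_left_comm, ← Complex.exp_add]
      congr 2
      push_cast
      ring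
    rw [hfac, norm_mul, Complex.norm_exp_ofReal_mul_I, one_mul]
    exact hsc (ω * τ)
  have h2 : Tendsto (fun T : ℝ => (1 / (T:ℂ)) * S T) atTop (nhds 0) := by
    have heq : (fun T : ℝ => (1 / (T:ℂ)) * S T) = fun T : ℝ => ∑ k ∈ s,
        c k * ((1 / (T:ℂ)) * ∫ τ in (0:ℝ)..T,
          Complex.exp ((((a + (k:ℝ) * ω) : ℝ) * Complex.I) * (τ:ℂ))) := by
      funext T; rw [hS, Finset.mul_sum]; exact Finset.sum_congr rfl fun k _ => by ring
    rw [heq, show (0 : ℂ) = ∑ k ∈ s, c k * 0 by simp]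
    apply tendsto_finset_sum
    intro k _
    apply Tendsto.const_mul
    apply tendsto_cdiv_of_bounded _ (2 / ‖(((a + (k:ℝ) * ω) : ℝ) * Complex.I : ℂ)‖)
    intro T
    rw [integral_exp_mul_complex (hknz k), norm_div]
    gcongr
    have e1 : ‖Complex.exp ((((a + (k:ℝ) * ω) : ℝ) * Complex.I) * (T:ℂ))‖ = 1 := by
      rw [show (((a + (k:ℝ) * ω) : ℝ) * Complex.I) * (T:ℂ)
        = (((a + (k:ℝ) * ω) * T : ℝ) : ℂ) * Complex.I by push_cast; ring]
      exact Complex.norm_exp_ofReal_mul_I _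
    have e2 : ‖Complex.exp ((((a + (k:ℝ) * ω) : ℝ) * Complex.I) * ((0:ℝ):ℂ))‖ = 1 := by
      rw [show (((a + (k:ℝ) * ω) : ℝ) * Complex.I) * ((0:ℝ):ℂ)
        = ((0 : ℝ) : ℂ) * Complex.I by push_cast; ring]
      simpa using Complex.norm_exp_ofReal_mul_I 0
    calc ‖Complex.exp ((((a + (k:ℝ) * ω) : ℝ) * Complex.I) * (T:ℂ))
          - Complex.exp ((((a + (k:ℝ) * ω) : ℝ) * Complex.I) * ((0:ℝ):ℂ))‖
        ≤ _ + _ := norm_sub_le _ _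
      _ ≤ 2 := by rw [e1, e2]; norm_num
  have h2' := (NormedAddCommGroup.tendsto_nhds_zero.mp h2) (ε / 3) (by positivity)
  filter_upwards [eventually_gt_atTop (0:ℝ), h2'] with T hT hT2
  have key : (1 / (T:ℂ)) * ∫ τ in (0:ℝ)..T, Complex.exp ((a * τ : ℝ) * Complex.I) * g (ω * τ)
      = (1 / (T:ℂ)) * ((∫ τ in (0:ℝ)..T, Complex.exp ((a * τ : ℝ) * Complex.I) * g (ω * τ)) - S T)
        + (1 / (T:ℂ)) * S T := by ring
  rw [key]
  calc ‖_ + _‖ ≤ ‖(1 / (T:ℂ)) * ((∫ τ in (0:ℝ)..T,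
          Complex.exp ((a * τ : ℝ) * Complex.I) * g (ω * τ)) - S T)‖
        + ‖(1 / (T:ℂ)) * S T‖ := norm_add_le _ _
    _ ≤ (1 / T) * (ε / 3 * |T - 0|) + ε / 3 := by
        apply add_le_add _ hT2.le
        rw [norm_mul]
        apply mul_le_mul _ (h1 T) (norm_nonneg _) (by positivity)
        rw [norm_div, norm_one, Complex.norm_real, Real.norm_eq_abs, abs_of_pos hT]
    _ = ε / 3 + ε / 3 := by
        rw [sub_zero, abs_of_pos hT]; field_simp
    _ < ε := by linarith

lemma weyl_sin (ω a C₀ : ℝ) (ha : ∀ k : ℤ, a + k * ω ≠ 0) :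
    Tendsto (fun T : ℝ => (1 / T) * ∫ τ in (0:ℝ)..T,
      Real.sin (ω * τ) * Real.sin (a * τ - C₀ * Real.sin (ω * τ))) atTop (nhds 0) := by
  set g : ℝ → ℂ := fun θ => (Real.sin θ : ℂ) *
    Complex.exp ((-(C₀ * Real.sin θ) : ℝ) * Complex.I) with hg_def
  have hg : Continuous g := by fun_prop
  have hper : Function.Periodic g (2 * Real.pi) := by
    intro x
    simp only [hg_def, Real.sin_periodic x]
  have hF : ∀ τ : ℝ, Complex.exp ((a * τ : ℝ) * Complex.I) * g (ω * τ)
      = (Real.sin (ω * τ) : ℂ) *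
        Complex.exp (((a * τ - C₀ * Real.sin (ω * τ) : ℝ)) * Complex.I) := by
    intro τ
    rw [hg_def, mul_left_comm]
    congr 1
    rw [← Complex.exp_add]
    congr 1
    push_cast
    ring
  have hFc : Continuous fun τ : ℝ => Complex.exp ((a * τ : ℝ) * Complex.I) * g (ω * τ) := by
    fun_prop
  have key := (Complex.continuous_im.tendsto 0).comp (weyl_complex ω a ha g hg hper)
  simp only [Complex.zero_im] at key
  apply key.congr
  intro T
  simp only [Function.comp_apply]
  rw [show (1/(T:ℂ)) = ((1/T : ℝ) : ℂ) by push_cast; ring]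
  simp only [Complex.mul_im, Complex.ofReal_re, Complex.ofReal_im, zero_mul, add_zero]
  congr 1
  rw [← Complex.imCLM_apply,
    ← ContinuousLinearMap.intervalIntegral_comp_comm Complex.imCLM (hFc.intervalIntegrable _ _)]
  apply intervalIntegral.integral_congr
  intro τ _
  simp only
  rw [Complex.imCLM_apply, hF τ, Complex.mul_im]
  simp only [Complex.ofReal_re, Complex.ofReal_im, zero_mul, add_zero,
    Complex.exp_ofReal_mul_I_im]

lemma avg_sin_sq (ω : ℝ) (hω : 0 < ω) :
    Tendsto (fun T : ℝ => (1 / T) * ∫ τ in (0:ℝ)..T, Real.sin (ω * τ) ^ 2)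
      atTop (nhds (1 / 2)) := by
  have hlin : ∀ τ : ℝ, HasDerivAt (fun τ : ℝ => ω * τ) ω τ := by
    intro τ
    simpa using (hasDerivAt_id τ).const_mul ω
  have hsin : ∀ τ : ℝ, HasDerivAt (fun τ => Real.sin (ω * τ)) (Real.cos (ω * τ) * ω) τ := by
    intro τ
    simpa [Function.comp_def] using (Real.hasDerivAt_sin (ω * τ)).comp τ (hlin τ)
  have hcos : ∀ τ : ℝ, HasDerivAt (fun τ => Real.cos (ω * τ)) (-Real.sin (ω * τ) * ω) τ := by
    intro τ
    simpa [Function.comp_def] using (Real.hasDerivAt_cos (ω * τ)).comp τ (hlin τ)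
  set G : ℝ → ℝ := fun τ => τ / 2 - Real.sin (ω * τ) * Real.cos (ω * τ) / (2 * ω) with hG
  have hGd : ∀ τ : ℝ, HasDerivAt G (Real.sin (ω * τ) ^ 2) τ := by
    intro τ
    have h1 := (((hasDerivAt_id τ).div_const 2).sub
      ((((hsin τ).mul (hcos τ))).div_const (2 * ω)))
    refine h1.congr_deriv ?_
    have := Real.sin_sq_add_cos_sq (ω * τ)
    field_simp
    nlinarith [this]
  have hint : ∀ T : ℝ, (∫ τ in (0:ℝ)..T, Real.sin (ω * τ) ^ 2) = G T - G 0 := by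
    intro T
    exact intervalIntegral.integral_eq_sub_of_hasDerivAt (fun τ _ => hGd τ)
      ((by fun_prop : Continuous fun τ : ℝ => Real.sin (ω * τ) ^ 2).intervalIntegrable _ _)
  apply tendsto_avg_of_bounded _ _ (1 / (2 * ω))
  intro T
  rw [hint T, hG]
  simp only [mul_zero, Real.sin_zero, Real.cos_zero, zero_div, mul_one, zero_mul, sub_zero]
  have h2 : |Real.sin (ω * T) * Real.cos (ω * T)| ≤ 1 := by
    rw [abs_mul]
    exact mul_le_one₀ (Real.abs_sin_le_one _) (abs_nonneg _) (Real.abs_cos_le_one _)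
  rw [show T / 2 - Real.sin (ω*T) * Real.cos (ω*T) / (2*ω) - 1/2 * T
    = -(Real.sin (ω*T) * Real.cos (ω*T) / (2*ω)) by ring]
  rw [abs_neg, abs_div, abs_of_pos (by positivity : (0:ℝ) < 2*ω)]
  exact div_le_div_of_nonneg_right h2 (by positivity) |>.trans (le_refl _)

lemma avg_sin_four (ω : ℝ) (hω : 0 < ω) :
    Tendsto (fun T : ℝ => (1 / T) * ∫ τ in (0:ℝ)..T, Real.sin (ω * τ) ^ 4)
      atTop (nhds (3 / 8)) := by
  have hlin : ∀ (c τ : ℝ), HasDerivAt (fun τ : ℝ => c * (ω * τ)) (c * ω) τ := by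
    intro c τ
    simpa [mul_assoc] using (hasDerivAt_id τ).const_mul (c * ω)
  have hsin2 : ∀ τ : ℝ, HasDerivAt (fun τ => Real.sin (2 * (ω * τ)))
      (Real.cos (2 * (ω * τ)) * (2 * ω)) τ := by
    intro τ
    simpa [Function.comp_def] using (Real.hasDerivAt_sin (2 * (ω * τ))).comp τ (hlin 2 τ)
  have hsin4 : ∀ τ : ℝ, HasDerivAt (fun τ => Real.sin (4 * (ω * τ)))
      (Real.cos (4 * (ω * τ)) * (4 * ω)) τ := by
    intro τ
    simpa [Function.comp_def] using (Real.hasDerivAt_sin (4 * (ω * τ))).comp τ (hlin 4 τ)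
  set G : ℝ → ℝ := fun τ => 3 / 8 * τ - Real.sin (2 * (ω * τ)) / (4 * ω)
    + Real.sin (4 * (ω * τ)) / (32 * ω) with hG
  have hGd : ∀ τ : ℝ, HasDerivAt G (Real.sin (ω * τ) ^ 4) τ := by
    intro τ
    have h1 := (((hasDerivAt_id τ).const_mul (3/8:ℝ)).sub
      ((hsin2 τ).div_const (4 * ω))).add ((hsin4 τ).div_const (32 * ω))
    refine h1.congr_deriv ?_
    have h2 : Real.cos (2 * (ω * τ)) = 1 - 2 * Real.sin (ω * τ) ^ 2 := by
      rw [Real.cos_two_mul, ← Real.sin_sq_add_cos_sq (ω * τ)]; ring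
    have h4 : Real.cos (4 * (ω * τ)) = 2 * Real.cos (2 * (ω * τ)) ^ 2 - 1 := by
      rw [show (4 : ℝ) * (ω * τ) = 2 * (2 * (ω * τ)) by ring, Real.cos_two_mul]
    rw [h4, h2]
    field_simp
    ring
  have hint : ∀ T : ℝ, (∫ τ in (0:ℝ)..T, Real.sin (ω * τ) ^ 4) = G T - G 0 := by
    intro T
    exact intervalIntegral.integral_eq_sub_of_hasDerivAt (fun τ _ => hGd τ)
      ((by fun_prop : Continuous fun τ : ℝ => Real.sin (ω * τ) ^ 4).intervalIntegrable _ _)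
  apply tendsto_avg_of_bounded _ _ (1 / (4 * ω) + 1 / (32 * ω))
  intro T
  rw [hint T, hG]
  simp only [mul_zero, Real.sin_zero, zero_div, zero_mul, sub_zero, add_zero, zero_add]
  rw [show 3/8 * T - Real.sin (2*(ω*T)) / (4*ω) + Real.sin (4*(ω*T)) / (32*ω)
      - 3/8 * T = Real.sin (4*(ω*T)) / (32*ω) - Real.sin (2*(ω*T)) / (4*ω) by ring]
  have hb : ∀ (y c : ℝ), 0 < c → |Real.sin y / c| ≤ 1 / c := by
    intro y c hc
    rw [abs_div, abs_of_pos hc]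
    exact div_le_div_of_nonneg_right (Real.abs_sin_le_one y) hc.le
  calc |Real.sin (4*(ω*T)) / (32*ω) - Real.sin (2*(ω*T)) / (4*ω)|
      ≤ |Real.sin (4*(ω*T)) / (32*ω)| + |Real.sin (2*(ω*T)) / (4*ω)| := abs_sub _ _
    _ ≤ 1 / (32*ω) + 1 / (4*ω) :=
        add_le_add (hb _ _ (by positivity)) (hb _ _ (by positivity))
    _ = 1 / (4*ω) + 1 / (32*ω) := by ring

lemma avg_phi (ω C₀ : ℝ) (hω : 0 < ω) (Φ : ℝ → ℝ) (hΦ : Continuous Φ) :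
    Tendsto (fun T : ℝ => (1 / T) * ∫ τ in (0:ℝ)..T,
      Real.sin (ω * τ) * Φ (C₀ * ω * Real.cos (ω * τ))) atTop (nhds 0) := by
  set Ψ : ℝ → ℝ := fun x => ∫ t in (0:ℝ)..x, Φ (C₀ * ω * t) with hΨ
  have hΨd : ∀ x : ℝ, HasDerivAt Ψ (Φ (C₀ * ω * x)) x := by
    intro x
    exact ((by fun_prop : Continuous fun t : ℝ => Φ (C₀ * ω * t)).integral_hasStrictDerivAt
      0 x).hasDerivAt
  have hΨc : Continuous Ψ := by
    apply continuous_iff_continuousAt.mpr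
    intro x
    exact (hΨd x).continuousAt
  obtain ⟨M, hM⟩ := (isCompact_Icc (a := (-1:ℝ)) (b := 1)).exists_bound_of_continuousOn
    hΨc.continuousOn
  set G : ℝ → ℝ := fun τ => -(1 / ω) * Ψ (Real.cos (ω * τ)) with hG
  have hGd : ∀ τ : ℝ, HasDerivAt G (Real.sin (ω * τ) * Φ (C₀ * ω * Real.cos (ω * τ))) τ := by
    intro τ
    have hcos : HasDerivAt (fun τ => Real.cos (ω * τ)) (-Real.sin (ω * τ) * ω) τ := by
      simpa [Function.comp_def, mul_comm] using (Real.hasDerivAt_cos (ω * τ)).comp τ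
        (by simpa using (hasDerivAt_id τ).const_mul ω)
    have h1 := ((hΨd (Real.cos (ω * τ))).comp τ hcos).const_mul (-(1 / ω))
    refine h1.congr_deriv ?_
    field_simp
  have hint : ∀ T : ℝ, (∫ τ in (0:ℝ)..T,
      Real.sin (ω * τ) * Φ (C₀ * ω * Real.cos (ω * τ))) = G T - G 0 := by
    intro T
    exact intervalIntegral.integral_eq_sub_of_hasDerivAt (fun τ _ => hGd τ)
      ((by fun_prop : Continuous fun τ : ℝ =>
        Real.sin (ω * τ) * Φ (C₀ * ω * Real.cos (ω * τ))).intervalIntegrable _ _)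
  have hM' : ∀ τ : ℝ, |G τ| ≤ (1 / ω) * M := by
    intro τ
    rw [hG]
    simp only [neg_mul, abs_neg, abs_mul]
    rw [abs_of_pos (by positivity : (0:ℝ) < 1 / ω)]
    apply mul_le_mul_of_nonneg_left _ (by positivity : (0:ℝ) ≤ 1 / ω)
    rw [← Real.norm_eq_abs]
    exact hM _ ⟨Real.neg_one_le_cos _, Real.cos_le_one _⟩
  apply tendsto_avg_of_bounded _ _ (2 * ((1 / ω) * M))
  intro T
  rw [hint T, zero_mul, sub_zero]
  calc |G T - G 0| ≤ |G T| + |G 0| := abs_sub _ _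
    _ ≤ (1 / ω) * M + (1 / ω) * M := add_le_add (hM' T) (hM' 0)
    _ = 2 * ((1 / ω) * M) := by ring

open Filter

/-- Equation (5.14b): the linear growth rate `I_{1,s}` of `M_{1,s}(T)` in the first step
of the iteration for the quasi-periodic attractor near the 3:2 resonance. -/
theorem growth_rate_M1s
    (ω n : ℝ) (hω : 0 < ω) (hn : 0 < n) (hirr : Irrational (ω / n))
    (I₀ : Finset ℤ) (hI₀ : ∀ i ∈ I₀, i ≠ 0) (B : ℤ → ℝ)
    (γ μ A₃ C₀ : ℝ) (Φ : ℝ → ℝ) (hΦ : Continuous Φ) :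
    Tendsto (fun T : ℝ => (1 / T) * ∫ τ in (0:ℝ)..T,
        Real.sin (ω * τ) *
          (2 * ∑ i ∈ I₀, B i * Real.sin ((i : ℝ) * n * τ - C₀ * Real.sin (ω * τ))
            - 2 * γ * Φ (C₀ * ω * Real.cos (ω * τ))
            - μ * C₀ * Real.sin (ω * τ)
            + (A₃ / 3) * C₀ ^ 3 * (Real.sin (ω * τ)) ^ 3)) atTop
      (nhds (-(1 / 2) * μ * C₀ + (A₃ / 8) * C₀ ^ 3)) := by
  -- frequency condition
  have hfreq : ∀ i ∈ I₀, ∀ k : ℤ, (i : ℝ) * n + (k : ℝ) * ω ≠ 0 := by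
    intro i hi k h
    have hi0 : (i : ℝ) ≠ 0 := Int.cast_ne_zero.mpr (hI₀ i hi)
    rcases eq_or_ne k 0 with rfl | hk
    · simp only [Int.cast_zero, zero_mul, add_zero] at h
      exact (mul_ne_zero hi0 hn.ne') h
    · apply hirr
      refine ⟨-(i : ℚ) / (k : ℚ), ?_⟩
      have hk0 : (k : ℝ) ≠ 0 := Int.cast_ne_zero.mpr hk
      push_cast
      field_simp
      linarith [h]
  -- the pieces
  set h1 : ℤ → ℝ → ℝ := fun i τ =>
    Real.sin (ω * τ) * Real.sin ((i : ℝ) * n * τ - C₀ * Real.sin (ω * τ)) with hh1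
  set p : ℝ → ℝ := fun τ => ∑ i ∈ I₀, (2 * B i) * h1 i τ with hp
  set q : ℝ → ℝ := fun τ =>
    (-(2 * γ)) * (Real.sin (ω * τ) * Φ (C₀ * ω * Real.cos (ω * τ)))
    + ((-(μ * C₀)) * Real.sin (ω * τ) ^ 2 + ((A₃ / 3) * C₀ ^ 3) * Real.sin (ω * τ) ^ 4) with hq
  have hc1 : ∀ i : ℤ, Continuous (h1 i) := by intro i; rw [hh1]; fun_prop
  have hcp : Continuous p := continuous_finset_sum _ fun i _ => continuous_const.mul (hc1 i)
  have hcq : Continuous q := by rw [hq]; fun_prop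
  -- pointwise decomposition
  have hpt : ∀ τ : ℝ, Real.sin (ω * τ) *
      (2 * ∑ i ∈ I₀, B i * Real.sin ((i : ℝ) * n * τ - C₀ * Real.sin (ω * τ))
        - 2 * γ * Φ (C₀ * ω * Real.cos (ω * τ))
        - μ * C₀ * Real.sin (ω * τ)
        + (A₃ / 3) * C₀ ^ 3 * (Real.sin (ω * τ)) ^ 3) = p τ + q τ := by
    intro τ
    have e1 : Real.sin (ω * τ) *
        (2 * ∑ i ∈ I₀, B i * Real.sin ((i : ℝ) * n * τ - C₀ * Real.sin (ω * τ))) = p τ := by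
      rw [hp, Finset.mul_sum, Finset.mul_sum]
      exact Finset.sum_congr rfl fun i _ => by rw [hh1]; ring
    rw [hp] at e1
    rw [hp, hq, ← e1]
    ring
  simp only [hpt]
  -- split the integral
  have hsplit : ∀ T : ℝ, (1 / T) * ∫ τ in (0:ℝ)..T, (p τ + q τ)
      = (∑ i ∈ I₀, (2 * B i) * ((1 / T) * ∫ τ in (0:ℝ)..T, h1 i τ))
        + ((-(2 * γ)) * ((1 / T) * ∫ τ in (0:ℝ)..T,
            Real.sin (ω * τ) * Φ (C₀ * ω * Real.cos (ω * τ)))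
          + ((-(μ * C₀)) * ((1 / T) * ∫ τ in (0:ℝ)..T, Real.sin (ω * τ) ^ 2)
            + ((A₃ / 3) * C₀ ^ 3) * ((1 / T) * ∫ τ in (0:ℝ)..T, Real.sin (ω * τ) ^ 4))) := by
    intro T
    have i1 : (∫ τ in (0:ℝ)..T, (p τ + q τ))
        = (∫ τ in (0:ℝ)..T, p τ) + ∫ τ in (0:ℝ)..T, q τ :=
      intervalIntegral.integral_add (hcp.intervalIntegrable _ _) (hcq.intervalIntegrable _ _)
    have i2 : (∫ τ in (0:ℝ)..T, p τ)
        = ∑ i ∈ I₀, (2 * B i) * ∫ τ in (0:ℝ)..T, h1 i τ := by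
      simp only [hp]
      rw [intervalIntegral.integral_finset_sum]
      · exact Finset.sum_congr rfl fun i _ => intervalIntegral.integral_const_mul _ _
      · exact fun i _ => (continuous_const.mul (hc1 i)).intervalIntegrable _ _
    have i3 : (∫ τ in (0:ℝ)..T, q τ)
        = (-(2 * γ)) * (∫ τ in (0:ℝ)..T, Real.sin (ω * τ) * Φ (C₀ * ω * Real.cos (ω * τ)))
          + ((-(μ * C₀)) * (∫ τ in (0:ℝ)..T, Real.sin (ω * τ) ^ 2)
            + ((A₃ / 3) * C₀ ^ 3) * ∫ τ in (0:ℝ)..T, Real.sin (ω * τ) ^ 4) := by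
      simp only [hq]
      rw [intervalIntegral.integral_add ((by fun_prop :
          Continuous fun τ : ℝ => (-(2 * γ)) * (Real.sin (ω * τ) *
            Φ (C₀ * ω * Real.cos (ω * τ)))).intervalIntegrable _ _)
        ((by fun_prop : Continuous fun τ : ℝ => (-(μ * C₀)) * Real.sin (ω * τ) ^ 2
          + ((A₃ / 3) * C₀ ^ 3) * Real.sin (ω * τ) ^ 4).intervalIntegrable _ _)]
      rw [intervalIntegral.integral_add ((by fun_prop :
          Continuous fun τ : ℝ => (-(μ * C₀)) * Real.sin (ω * τ) ^ 2).intervalIntegrable _ _)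
        ((by fun_prop : Continuous fun τ : ℝ =>
          ((A₃ / 3) * C₀ ^ 3) * Real.sin (ω * τ) ^ 4).intervalIntegrable _ _)]
      rw [intervalIntegral.integral_const_mul, intervalIntegral.integral_const_mul,
        intervalIntegral.integral_const_mul]
    rw [i1, i2, i3, mul_add, Finset.mul_sum]
    congr 1
    · exact Finset.sum_congr rfl fun i _ => by ring
    · ring
  simp only [hsplit]
  -- limits of the pieces
  have hP' : Tendsto (fun T : ℝ => ∑ i ∈ I₀, (2 * B i) *
      ((1 / T) * ∫ τ in (0:ℝ)..T, h1 i τ)) atTop (nhds (∑ i ∈ I₀, (2 * B i) * 0)) := by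
    apply tendsto_finset_sum
    intro i hi
    apply Tendsto.const_mul
    simp only [hh1]
    exact weyl_sin ω ((i : ℝ) * n) C₀ (hfreq i hi)
  have hP : Tendsto (fun T : ℝ => ∑ i ∈ I₀, (2 * B i) *
      ((1 / T) * ∫ τ in (0:ℝ)..T, h1 i τ)) atTop (nhds 0) := by
    simpa using hP'
  have hQ1 := (avg_phi ω C₀ hω Φ hΦ).const_mul (-(2 * γ))
  have hQ2 := (avg_sin_sq ω hω).const_mul (-(μ * C₀))
  have hQ3 := (avg_sin_four ω hω).const_mul ((A₃ / 3) * C₀ ^ 3)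
  have := hP.add (hQ1.add (hQ2.add hQ3))
  convert this using 2
  ring
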